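/- Assume the matrix A = (Q i t)_{t∈T, i∈I} is totally unimodular with rank |T|, and let G ∈ ℝ with G > 2·|T|. Consider the weighted linear program max {Σ_{i∈I} (1 + G·Σ_{t∈T} p i t · Q i t)·δ i | δ ∈ P} and its dual min {Σ_{i∈I} δ̄ᵢ·γ i | Σ_{t∈T} Q i t · π t + γ i − λ i = 1 + G·Σ_{t∈T} p i t · Q i t for all i ∈ I, γ ≥ 0, λ ≥ 0}. If δ* is a primal optimal extreme point and (π*, γ*, λ*) is a dual optimal extreme point of this weighted program, then the rounded prices π̄ defined by π̄ t = ⌊π* t / G + 1/2⌋ for every t ∈ T satisfy the price conditions together with δ*: for every i ∈ I, (δ*ᵢ > 0 → Σ_{t∈T} (p i t − π̄ t)·Q i t ≥ 0) and (δ*ᵢ < δ̄ᵢ → Σ_{t∈T} (p i t − π̄ t)·Q i t ≤ 0). -/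

import Mathlib

/-- An integer matrix is totally unimodular if every square submatrix has determinant
`0`, `1`, or `-1`. -/
def IsTotallyUnimodularMat {m n : Type*} [Fintype m] [Fintype n]
    (A : Matrix m n ℤ) : Prop :=
  ∀ (k : ℕ) (f : Fin k → m) (g : Fin k → n),
    Function.Injective f → Function.Injective g →
      (A.submatrix f g).det = 0 ∨ (A.submatrix f g).det = 1 ∨ (A.submatrix f g).det = -1


open scoped RealInnerProductSpace

/-- The cone of nonnegative combinations of a finite family of vectors. -/
def coneOf {E : Type*} [AddCommMonoid E] [Module ℝ E] {κ : Type*} [Fintype κ]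
    (w : κ → E) : Set E :=
  {x | ∃ t : κ → ℝ, (∀ k, 0 ≤ t k) ∧ x = ∑ k, t k • w k}

lemma coneOf_comp_equiv {E : Type*} [AddCommMonoid E] [Module ℝ E]
    {κ κ' : Type*} [Fintype κ] [Fintype κ'] (w : κ → E) (e : κ' ≃ κ) :
    coneOf (w ∘ e) = coneOf w := by
  ext x
  constructor
  · rintro ⟨t, ht, rfl⟩
    exact ⟨t ∘ e.symm, fun k => ht _, by
      rw [← Equiv.sum_comp e (fun k => (t ∘ e.symm) k • w k)]
      simp⟩
  · rintro ⟨t, ht, rfl⟩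
    exact ⟨t ∘ e, fun k => ht _, by
      rw [← Equiv.sum_comp e (fun k => t k • w k)]
      simp⟩

lemma isClosed_coneOf_fin {E : Type*} [NormedAddCommGroup E] [NormedSpace ℝ E]
    [FiniteDimensional ℝ E] : ∀ (n : ℕ) (w : Fin n → E), IsClosed (coneOf w) := by
  intro n
  induction n using Nat.strong_induction_on with
  | _ n ih =>
  intro w
  match n with
  | 0 =>
    have : coneOf w = {0} := by
      ext x
      simp only [coneOf, Set.mem_setOf_eq, Set.mem_singleton_iff]
      constructor
      · rintro ⟨t, _, rfl⟩; simp
      · rintro rfl; exact ⟨fun k => 0, fun k => le_refl _, by simp⟩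
    rw [this]; exact isClosed_singleton
  | (n + 1) =>
    by_cases hLI : LinearIndependent ℝ w
    · -- independent case: closed embedding image of the nonnegative orthant
      set L : (Fin (n+1) → ℝ) →ₗ[ℝ] E := Fintype.linearCombination ℝ w with hL
      have hLapp : ∀ t, L t = ∑ k, t k • w k := fun t => by
        simp [hL, Fintype.linearCombination_apply]
      have hker : LinearMap.ker L = ⊥ := by
        rw [LinearMap.ker_eq_bot']
        intro t ht
        have := Fintype.linearIndependent_iff.mp hLI t (by rw [← hLapp]; exact ht)
        funext k; exact this k
      have hemb := LinearMap.isClosedEmbedding_of_injective (f := L) hker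
      have horth : IsClosed {t : Fin (n+1) → ℝ | ∀ k, 0 ≤ t k} := by
        have : {t : Fin (n+1) → ℝ | ∀ k, 0 ≤ t k} = ⋂ k, {t | 0 ≤ t k} := by
          ext t; simp
        rw [this]
        exact isClosed_iInter fun k => isClosed_le continuous_const (continuous_apply k)
      have himg : coneOf w = L '' {t : Fin (n+1) → ℝ | ∀ k, 0 ≤ t k} := by
        ext x
        constructor
        · rintro ⟨t, ht, rfl⟩; exact ⟨t, ht, (hLapp t).symm ▸ rfl⟩
        · rintro ⟨t, ht, rfl⟩; exact ⟨t, ht, (hLapp t).symm⟩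
      rw [himg]
      exact hemb.isClosedMap _ horth
    · -- dependent case
      obtain ⟨g, hg0, j₀, hgj⟩ := Fintype.not_linearIndependent_iff.mp hLI
      -- get a relation with a negative coefficient
      obtain ⟨c, hc0, k₀, hck⟩ :
          ∃ c : Fin (n+1) → ℝ, (∑ k, c k • w k = 0) ∧ ∃ k, c k < 0 := by
        rcases lt_trichotomy (g j₀) 0 with h | h | h
        · exact ⟨g, hg0, j₀, h⟩
        · exact absurd h hgj
        · refine ⟨-g, by simpa using hg0, j₀, by simpa using h⟩
      have hunion : coneOf w = ⋃ k : {k : Fin (n+1) // c k < 0},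
          coneOf (w ∘ Fin.succAbove (k : Fin (n+1))) := by
        ext x
        constructor
        · rintro ⟨t, ht, rfl⟩
          set S : Finset (Fin (n+1)) := Finset.univ.filter (fun k => c k < 0) with hS
          have hSne : S.Nonempty := ⟨k₀, by simp [hS, hck]⟩
          obtain ⟨m, hmS, hmin⟩ := S.exists_min_image (fun k => t k / (-(c k))) hSne
          have hcm : c m < 0 := by simpa [hS] using hmS
          set s : ℝ := t m / (-(c m)) with hs
          have hs0 : 0 ≤ s := div_nonneg (ht m) (by linarith)
          set t' : Fin (n+1) → ℝ := fun k => t k + s * c k with ht'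
          have ht'0 : ∀ k, 0 ≤ t' k := by
            intro k
            by_cases hk : c k < 0
            · have hle : s ≤ t k / (-(c k)) := hmin k (by simp [hS, hk])
              have : s * (-(c k)) ≤ t k := by
                rw [← le_div_iff₀ (by linarith : (0:ℝ) < -(c k))]; exact hle
              simp only [ht']; nlinarith
            · push_neg at hk
              have : 0 ≤ s * c k := mul_nonneg hs0 hk
              simp only [ht']; linarith [ht k]
          have ht'm : t' m = 0 := by
            have h1 : (-c m) ≠ 0 := by linarith
            have h2 : s * c m = - t m := by
              rw [hs, div_mul_eq_mul_div, div_eq_iff h1]; ring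
            simp only [ht', h2]; ring
          have hsum : ∑ k, t' k • w k = ∑ k, t k • w k := by
            simp only [ht', add_smul, Finset.sum_add_distrib, mul_smul]
            rw [← Finset.smul_sum, hc0, smul_zero, add_zero]
          refine Set.mem_iUnion.mpr ⟨⟨m, hcm⟩, t' ∘ Fin.succAbove m, fun j => ht'0 _, ?_⟩
          rw [← hsum, Fin.sum_univ_succAbove (fun k => t' k • w k) m, ht'm, zero_smul,
            zero_add]
          rfl
        · intro hx
          obtain ⟨⟨m, _⟩, t, ht, rfl⟩ := Set.mem_iUnion.mp hx
          refine ⟨(m.insertNth (0:ℝ) t : Fin (n+1) → ℝ), fun k => ?_, ?_⟩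
          · rcases eq_or_ne k m with hk | hk
            · subst hk; simp
            · obtain ⟨j, hj⟩ := Fin.exists_succAbove_eq hk
              rw [← hj, Fin.insertNth_apply_succAbove]
              exact ht j
          · rw [Fin.sum_univ_succAbove
              (fun k => (m.insertNth (0:ℝ) t : Fin (n+1) → ℝ) k • w k) m]
            simp [Fin.insertNth_apply_succAbove, Function.comp]
      rw [hunion]
      exact isClosed_iUnion_of_finite fun k =>
        ih n (Nat.lt_succ_self n) (w ∘ Fin.succAbove (k : Fin (n+1)))

lemma isClosed_coneOf {E : Type*} [NormedAddCommGroup E] [NormedSpace ℝ E]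
    [FiniteDimensional ℝ E] {κ : Type*} [Fintype κ] (w : κ → E) :
    IsClosed (coneOf w) := by
  rw [← coneOf_comp_equiv w (Fintype.equivFin κ).symm]
  exact isClosed_coneOf_fin _ _

lemma farkas_aux {E : Type*} [NormedAddCommGroup E] [InnerProductSpace ℝ E]
    [FiniteDimensional ℝ E] {κ : Type*} [Fintype κ] (w : κ → E) (c : E)
    (h : ∀ d : E, (∀ k, ⟪w k, d⟫ ≤ 0) → ⟪c, d⟫ ≤ 0) : c ∈ coneOf w := by
  by_contra hc
  set K : ConvexCone ℝ E :=
    { carrier := coneOf w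
      smul_mem' := by
        rintro a ha x ⟨t, ht, rfl⟩
        exact ⟨fun k => a * t k, fun k => mul_nonneg ha.le (ht k), by
          rw [Finset.smul_sum]; simp [mul_smul]⟩
      add_mem' := by
        rintro x ⟨t, ht, rfl⟩ y ⟨u, hu, rfl⟩
        exact ⟨t + u, fun k => add_nonneg (ht k) (hu k), by
          simp [add_smul, Finset.sum_add_distrib]⟩ } with hK
  have hne : (K : Set E).Nonempty := ⟨0, fun k => 0, fun k => le_refl _, by simp⟩
  have hcl : IsClosed (K : Set E) := isClosed_coneOf w
  obtain ⟨y, hy1, hy2⟩ : ∃ y, (∀ x ∈ K, 0 ≤ ⟪x, y⟫) ∧ ⟪y, c⟫ < 0 := by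
    obtain ⟨y, hy1, hy2⟩ := ProperCone.hyperplane_separation' (E := E) (x₀ := c)
      ⟨{ carrier := coneOf w
         zero_mem' := ⟨fun k => 0, fun k => le_refl _, by simp⟩
         add_mem' := fun hx hy => K.add_mem' hx hy
         smul_mem' := by
           rintro a x ⟨t, ht, rfl⟩
           exact ⟨fun k => (a : ℝ) * t k, fun k => mul_nonneg a.2 (ht k), by
             rw [Finset.smul_sum]; simp [mul_smul, NNReal.smul_def]⟩ }, hcl⟩ hc
    exact ⟨y, hy1, by rw [real_inner_comm]; exact hy2⟩
  have hwk : ∀ k, w k ∈ K := by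
    classical
    intro k
    refine ⟨Pi.single k 1, fun m => ?_, ?_⟩
    · rcases eq_or_ne m k with hm | hm <;> simp [Pi.single_apply, hm]
    · simp [Pi.single_apply, ite_smul, Finset.sum_ite_eq']
  have := h (-y) (fun k => by
    rw [inner_neg_right]
    linarith [hy1 (w k) (hwk k)])
  rw [inner_neg_right] at this
  rw [real_inner_comm] at hy2
  linarith

/-- Farkas' lemma for `I → ℝ` with explicit dot products. -/
lemma farkas_pi {κ I : Type*} [Fintype κ] [Fintype I] (w : κ → I → ℝ) (c : I → ℝ)
    (h : ∀ d : I → ℝ, (∀ k, ∑ i, w k i * d i ≤ 0) → ∑ i, c i * d i ≤ 0) :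
    ∃ t : κ → ℝ, (∀ k, 0 ≤ t k) ∧ ∀ i, c i = ∑ k, t k * w k i := by
  classical
  set el : EuclideanSpace ℝ I ≃ₗ[ℝ] (I → ℝ) := WithLp.linearEquiv 2 ℝ (I → ℝ) with hel
  have hinner : ∀ (x : I → ℝ) (d : EuclideanSpace ℝ I),
      ⟪el.symm x, d⟫ = ∑ i, x i * el d i := by
    intro x d
    rw [PiLp.inner_apply]
    refine Finset.sum_congr rfl fun i _ => ?_
    simp only [hel, RCLike.inner_apply, conj_trivial, WithLp.linearEquiv_symm_apply,
      WithLp.linearEquiv_apply]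
    exact mul_comm _ _
  have hmem : el.symm c ∈ coneOf (fun k => el.symm (w k)) := by
    apply farkas_aux
    intro d hd
    rw [hinner c d]
    exact h (el d) fun k => by rw [← hinner (w k) d]; exact hd k
  obtain ⟨t, ht, hcomb⟩ := hmem
  refine ⟨t, ht, fun i => ?_⟩
  have : c = ∑ k, t k • w k := by
    have := congrArg el hcomb
    simpa [map_sum] using this
  rw [this]
  simp [Finset.sum_apply]

/-- From a primal optimal solution, Farkas' lemma produces a dual feasible solution with
equal objective value. -/
lemma exists_dual_certificate {I T : Type*} [Fintype I] [Fintype T]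
    (Q : I → T → ℤ) (δbar : I → ℕ) (c : I → ℝ) (δstar : I → ℝ)
    (hfeas : ∀ t, ∑ i, (Q i t : ℝ) * δstar i = 0)
    (hbounds : ∀ i, 0 ≤ δstar i ∧ δstar i ≤ (δbar i : ℝ))
    (hopt : ∀ δ : I → ℝ, (∀ t, ∑ i, (Q i t : ℝ) * δ i = 0) →
      (∀ i, 0 ≤ δ i ∧ δ i ≤ (δbar i : ℝ)) → ∑ i, c i * δ i ≤ ∑ i, c i * δstar i) :
    ∃ (π : T → ℝ) (γ lam : I → ℝ),
      (∀ i, (∑ t, (Q i t : ℝ) * π t) + γ i - lam i = c i) ∧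
      (∀ i, 0 ≤ γ i) ∧ (∀ i, 0 ≤ lam i) ∧
      ∑ i, (δbar i : ℝ) * γ i = ∑ i, c i * δstar i := by
  classical
  set zInd : I → ℝ := fun i₀ => if δstar i₀ = 0 then 1 else 0 with hzInd
  set uInd : I → ℝ := fun i₀ => if δstar i₀ = (δbar i₀ : ℝ) then 1 else 0 with huInd
  set w : (T ⊕ T) ⊕ (I ⊕ I) → I → ℝ := fun k =>
    match k with
    | Sum.inl (Sum.inl t) => fun i => (Q i t : ℝ)
    | Sum.inl (Sum.inr t) => fun i => -(Q i t : ℝ)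
    | Sum.inr (Sum.inl i₀) => fun i => -(zInd i₀) * (if i = i₀ then (1:ℝ) else 0)
    | Sum.inr (Sum.inr i₀) => fun i => uInd i₀ * (if i = i₀ then (1:ℝ) else 0) with hw
  have hdotsingle : ∀ (a : ℝ) (i₀ : I) (d : I → ℝ),
      ∑ i, (a * (if i = i₀ then (1:ℝ) else 0)) * d i = a * d i₀ := by
    intro a i₀ d
    rw [Finset.sum_eq_single i₀]
    · simp
    · intro b _ hb; simp [hb]
    · intro hb; exact absurd (Finset.mem_univ i₀) hb
  have hfar : ∀ d : I → ℝ, (∀ k, ∑ i, w k i * d i ≤ 0) → ∑ i, c i * d i ≤ 0 := by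
    intro d hd
    by_contra hpos
    push_neg at hpos
    rcases isEmpty_or_nonempty I with hI | hI
    · rw [Finset.sum_of_isEmpty] at hpos; exact absurd hpos (lt_irrefl 0)
    have hqd : ∀ t, ∑ i, (Q i t : ℝ) * d i = 0 := by
      intro t
      have h1 := hd (Sum.inl (Sum.inl t))
      have h2 := hd (Sum.inl (Sum.inr t))
      simp only [hw] at h1 h2
      have : ∑ i, -(Q i t : ℝ) * d i = -∑ i, (Q i t : ℝ) * d i := by
        rw [← Finset.sum_neg_distrib]; ring_nf
      rw [this] at h2
      linarith
    have hlo : ∀ i₀, δstar i₀ = 0 → 0 ≤ d i₀ := by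
      intro i₀ h0
      have := hd (Sum.inr (Sum.inl i₀))
      simp only [hw] at this
      rw [hdotsingle] at this
      simp only [hzInd, h0, if_pos rfl] at this
      norm_num at this
      linarith
    have hhi : ∀ i₀, δstar i₀ = (δbar i₀ : ℝ) → d i₀ ≤ 0 := by
      intro i₀ h0
      have := hd (Sum.inr (Sum.inr i₀))
      simp only [hw] at this
      rw [hdotsingle] at this
      simp only [huInd, h0, if_pos rfl] at this
      norm_num at this
      linarith
    set B : I → ℝ := fun i => if 0 < d i then ((δbar i : ℝ) - δstar i) / d i
      else if d i < 0 then δstar i / (- d i) else 1 with hB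
    have hBpos : ∀ i, 0 < B i := by
      intro i
      simp only [hB]
      split_ifs with h1 h2
      · apply div_pos _ h1
        rcases lt_or_eq_of_le (hbounds i).2 with h | h
        · linarith
        · exact absurd (hhi i h) (by linarith)
      · apply div_pos _ (by linarith)
        rcases lt_or_eq_of_le (hbounds i).1 with h | h
        · linarith
        · exact absurd (hlo i h.symm) (by linarith)
      · norm_num
    set ε : ℝ := min 1 (Finset.univ.inf' Finset.univ_nonempty B) with hε
    have hεpos : 0 < ε := by
      apply lt_min one_pos
      rw [Finset.lt_inf'_iff]
      exact fun b _ => hBpos b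
    have hεB : ∀ i, ε ≤ B i := fun i =>
      le_trans (min_le_right _ _) (Finset.inf'_le _ (Finset.mem_univ i))
    set δ' : I → ℝ := fun i => δstar i + ε * d i with hδ'
    have hfeas' : ∀ t, ∑ i, (Q i t : ℝ) * δ' i = 0 := by
      intro t
      simp only [hδ', mul_add]
      rw [Finset.sum_add_distrib, hfeas t]
      have : ∑ i, (Q i t : ℝ) * (ε * d i) = ε * ∑ i, (Q i t : ℝ) * d i := by
        rw [Finset.mul_sum]; exact Finset.sum_congr rfl fun i _ => by ring
      rw [this, hqd t]; ring
    have hbounds' : ∀ i, 0 ≤ δ' i ∧ δ' i ≤ (δbar i : ℝ) := by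
      intro i
      constructor
      · rcases le_or_gt 0 (d i) with h | h
        · have := (hbounds i).1
          have h2 := mul_nonneg hεpos.le h
          simp only [hδ']; linarith
        · have h1 : ε ≤ δstar i / (- d i) := by
            have := hεB i; simp only [hB, if_neg (not_lt.mpr h.le), if_pos h] at this
            exact this
          have h2 : ε * (- d i) ≤ δstar i := by
            rw [← le_div_iff₀ (by linarith : (0:ℝ) < - d i)]; exact h1
          simp only [hδ']; nlinarith
      · rcases le_or_gt (d i) 0 with h | h
        · have := (hbounds i).2
          have h2 := mul_nonpos_of_nonneg_of_nonpos hεpos.le h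
          simp only [hδ']; linarith
        · have h1 : ε ≤ ((δbar i : ℝ) - δstar i) / d i := by
            have := hεB i; simp only [hB, if_pos h] at this
            exact this
          have h2 : ε * d i ≤ (δbar i : ℝ) - δstar i := by
            rw [← le_div_iff₀ h]; exact h1
          simp only [hδ']; linarith
    have := hopt δ' hfeas' hbounds'
    simp only [hδ', mul_add] at this
    rw [Finset.sum_add_distrib] at this
    have heq : ∑ i, c i * (ε * d i) = ε * ∑ i, c i * d i := by
      rw [Finset.mul_sum]; exact Finset.sum_congr rfl fun i _ => by ring
    rw [heq] at this
    nlinarith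
  obtain ⟨τ, hτ0, hτ⟩ := farkas_pi w c hfar
  set π : T → ℝ := fun t => τ (Sum.inl (Sum.inl t)) - τ (Sum.inl (Sum.inr t)) with hπ
  set γ : I → ℝ := fun i₀ => uInd i₀ * τ (Sum.inr (Sum.inr i₀)) with hγ
  set lam : I → ℝ := fun i₀ => zInd i₀ * τ (Sum.inr (Sum.inl i₀)) with hlam
  have hfd : ∀ i, (∑ t, (Q i t : ℝ) * π t) + γ i - lam i = c i := by
    intro i
    have := hτ i
    simp only [Fintype.sum_sum_type] at this
    have e3 : ∑ i₀, τ (Sum.inr (Sum.inl i₀)) * w (Sum.inr (Sum.inl i₀)) i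
        = - (zInd i * τ (Sum.inr (Sum.inl i))) := by
      rw [Finset.sum_eq_single i]
      · simp only [hw]; simp; ring
      · intro b _ hb; simp only [hw]; simp [Ne.symm hb]
      · intro hb; exact absurd (Finset.mem_univ i) hb
    have e4 : ∑ i₀, τ (Sum.inr (Sum.inr i₀)) * w (Sum.inr (Sum.inr i₀)) i
        = uInd i * τ (Sum.inr (Sum.inr i)) := by
      rw [Finset.sum_eq_single i]
      · simp only [hw]; simp; ring
      · intro b _ hb; simp only [hw]; simp [Ne.symm hb]
      · intro hb; exact absurd (Finset.mem_univ i) hb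
    rw [e3, e4] at this
    simp only [hw] at this
    rw [this]
    simp only [hπ, hγ, hlam]
    have : ∑ t, (Q i t : ℝ) * (τ (Sum.inl (Sum.inl t)) - τ (Sum.inl (Sum.inr t)))
        = ∑ t, τ (Sum.inl (Sum.inl t)) * (Q i t : ℝ)
          + ∑ t, τ (Sum.inl (Sum.inr t)) * -(Q i t : ℝ) := by
      rw [← Finset.sum_add_distrib]; exact Finset.sum_congr rfl fun t _ => by ring
    rw [this]; ring
  have hγ0 : ∀ i, 0 ≤ γ i := by
    intro i₀
    apply mul_nonneg _ (hτ0 _)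
    simp only [huInd]; split_ifs <;> norm_num
  have hlam0 : ∀ i, 0 ≤ lam i := by
    intro i₀
    apply mul_nonneg _ (hτ0 _)
    simp only [hzInd]; split_ifs <;> norm_num
  refine ⟨π, γ, lam, hfd, hγ0, hlam0, ?_⟩
  have hγδ : ∀ i, (δbar i : ℝ) * γ i = δstar i * γ i := by
    intro i
    simp only [hγ, huInd]
    split_ifs with h
    · rw [h]
    · ring
  have hld : ∀ i, δstar i * lam i = 0 := by
    intro i
    simp only [hlam, hzInd]
    split_ifs with h
    · rw [h]; ring
    · ring
  have key : ∀ i, (δbar i : ℝ) * γ i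
      = c i * δstar i - ∑ t, (Q i t : ℝ) * δstar i * π t := by
    intro i
    rw [hγδ i]
    have hγeq : γ i = c i - (∑ t, (Q i t : ℝ) * π t) + lam i := by
      linarith [hfd i]
    rw [hγeq, mul_add, mul_sub, hld i, add_zero, Finset.mul_sum]
    have : ∑ t, δstar i * ((Q i t : ℝ) * π t) = ∑ t, (Q i t : ℝ) * δstar i * π t :=
      Finset.sum_congr rfl fun t _ => by ring
    rw [this]; ring
  calc ∑ i, (δbar i : ℝ) * γ i
      = ∑ i, (c i * δstar i - ∑ t, (Q i t : ℝ) * δstar i * π t) :=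
        Finset.sum_congr rfl fun i _ => key i
    _ = ∑ i, c i * δstar i - ∑ i, ∑ t, (Q i t : ℝ) * δstar i * π t := by
        rw [Finset.sum_sub_distrib]
    _ = ∑ i, c i * δstar i := by
        rw [Finset.sum_comm]
        have : ∑ t, ∑ i, (Q i t : ℝ) * δstar i * π t = 0 := by
          apply Finset.sum_eq_zero
          intro t _
          rw [← Finset.sum_mul, hfeas t, zero_mul]
        rw [this, sub_zero]

section TUlemmas
open scoped Matrix

lemma IsTotallyUnimodularMat.submatrix' {m n m' n' : Type*} [Fintype m] [Fintype n]
    [Fintype m'] [Fintype n'] {A : Matrix m n ℤ} (hA : IsTotallyUnimodularMat A)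
    (f : m' → m) (g : n' → n) (hf : Function.Injective f) (hg : Function.Injective g) :
    IsTotallyUnimodularMat (A.submatrix f g) := by
  intro k f' g' hf' hg'
  rw [Matrix.submatrix_submatrix]
  exact hA k _ _ (hf.comp hf') (hg.comp hg')

lemma IsTotallyUnimodularMat.transpose {m n : Type*} [Fintype m] [Fintype n]
    {A : Matrix m n ℤ} (hA : IsTotallyUnimodularMat A) :
    IsTotallyUnimodularMat Aᵀ := by
  intro k f g hf hg
  have h : (Aᵀ.submatrix f g) = (A.submatrix g f)ᵀ := rfl
  rw [h, Matrix.det_transpose]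
  exact hA k g f hg hf

lemma IsTotallyUnimodularMat.det_mem {k : ℕ} {B : Matrix (Fin k) (Fin k) ℤ}
    (hB : IsTotallyUnimodularMat B) : B.det = 0 ∨ B.det = 1 ∨ B.det = -1 := by
  have := hB k id id Function.injective_id Function.injective_id
  simpa using this

/-- A square TU matrix with one column replaced by a standard basis vector still has
determinant in `{0, 1, -1}`. -/
lemma IsTotallyUnimodularMat.det_updateCol_single {k : ℕ}
    {B : Matrix (Fin (k+1)) (Fin (k+1)) ℤ} (hB : IsTotallyUnimodularMat B)
    (r j : Fin (k+1)) :
    (B.updateCol r (Pi.single j 1)).det = 0 ∨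
    (B.updateCol r (Pi.single j 1)).det = 1 ∨
    (B.updateCol r (Pi.single j 1)).det = -1 := by
  classical
  set N : Matrix (Fin (k+1)) (Fin (k+1)) ℤ := B.updateCol r (Pi.single j 1) with hN
  set σ : Equiv.Perm (Fin (k+1)) := Equiv.swap 0 j with hσ
  set τ : Equiv.Perm (Fin (k+1)) := Equiv.swap 0 r with hτ
  set N' : Matrix (Fin (k+1)) (Fin (k+1)) ℤ := N.submatrix σ τ with hN'
  have hdet : N'.det = ((Equiv.Perm.sign σ : ℤˣ) : ℤ) * (((Equiv.Perm.sign τ : ℤˣ) : ℤ) * N.det) := by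
    have h1 : N' = (N.submatrix id τ).submatrix σ id := by
      rw [Matrix.submatrix_submatrix]; rfl
    rw [h1, Matrix.det_permute, Matrix.det_permute']
    norm_cast
  have hcol : ∀ i' : Fin (k+1), N' i' 0 = if i' = 0 then 1 else 0 := by
    intro i'
    have hτ0 : τ 0 = r := Equiv.swap_apply_left 0 r
    have h2 : N' i' 0 = (Pi.single j (1:ℤ) : Fin (k+1) → ℤ) (σ i') := by
      simp only [hN', Matrix.submatrix_apply, hτ0, hN, Matrix.updateCol_apply]
      simp
    rw [h2]
    rcases eq_or_ne i' 0 with h | h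
    · subst h
      have h4 : σ 0 = j := Equiv.swap_apply_left 0 j
      rw [h4]
      simp
    · have hne : σ i' ≠ j := by
        intro hc
        apply h
        have h3 := congrArg σ hc
        rw [hσ] at h3
        rw [Equiv.swap_apply_self, Equiv.swap_apply_right] at h3
        exact h3
      rw [if_neg h]
      simp [Pi.single_apply, hne]
  have hexp : N'.det = (N'.submatrix Fin.succ Fin.succ).det := by
    rw [Matrix.det_succ_column_zero]
    rw [Finset.sum_eq_single 0]
    · rw [hcol 0, if_pos rfl]
      rw [Fin.succAbove_zero]
      simp
    · intro b _ hb
      rw [hcol b, if_neg hb]; ring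
    · intro hb; exact absurd (Finset.mem_univ _) hb
  have hminor : N'.submatrix Fin.succ Fin.succ
      = B.submatrix (σ ∘ Fin.succ) (τ ∘ Fin.succ) := by
    ext i' j'
    simp only [Matrix.submatrix_apply, Function.comp_apply, hN', hN]
    rw [Matrix.updateCol_apply, if_neg]
    intro hc
    have hτ0 : τ 0 = r := Equiv.swap_apply_left 0 r
    have := τ.injective (hc.trans hτ0.symm)
    exact Fin.succ_ne_zero j' this
  have hmem : N'.det = 0 ∨ N'.det = 1 ∨ N'.det = -1 := by
    rw [hexp, hminor]
    exact hB k (σ ∘ Fin.succ) (τ ∘ Fin.succ)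
      (σ.injective.comp (Fin.succ_injective k)) (τ.injective.comp (Fin.succ_injective k))
  rcases Int.units_eq_one_or (Equiv.Perm.sign σ) with hs | hs <;>
    rcases Int.units_eq_one_or (Equiv.Perm.sign τ) with ht | ht <;>
      rw [hs, ht] at hdet <;> simp only [Units.val_one, Units.val_neg] at hdet <;>
        omega

/-- The determinant of a square TU matrix with one column replaced by the all-ones vector
is bounded in absolute value by the dimension. -/
lemma IsTotallyUnimodularMat.abs_det_updateCol_one_le {k : ℕ}
    {B : Matrix (Fin k) (Fin k) ℤ} (hB : IsTotallyUnimodularMat B) (r : Fin k) :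
    |(B.updateCol r (fun _ => (1:ℤ))).det| ≤ k := by
  classical
  have hk : k ≠ 0 := by rintro rfl; exact r.elim0
  obtain ⟨k', rfl⟩ := Nat.exists_eq_succ_of_ne_zero hk
  have h1 : (fun _ : Fin (k'+1) => (1:ℤ)) = ∑ j : Fin (k'+1), Pi.single j (1:ℤ) :=
    (Finset.univ_sum_single (fun _ => (1:ℤ))).symm
  have h2 : (B.updateCol r (fun _ => (1:ℤ))).det
      = ∑ j : Fin (k'+1), (B.updateCol r (Pi.single j 1)).det := by
    rw [← Matrix.cramer_apply, h1, map_sum]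
    rw [Finset.sum_apply]
    exact Finset.sum_congr rfl fun j _ => Matrix.cramer_apply _ _ _
  rw [h2]
  calc |∑ j : Fin (k'+1), (B.updateCol r (Pi.single j 1)).det|
      ≤ ∑ j : Fin (k'+1), |(B.updateCol r (Pi.single j 1)).det| :=
        Finset.abs_sum_le_sum_abs _ _
    _ ≤ ∑ _j : Fin (k'+1), (1:ℤ) := by
        refine Finset.sum_le_sum fun j _ => ?_
        rcases hB.det_updateCol_single r j with h | h | h <;> rw [h] <;> norm_num
    _ = (k' + 1 : ℤ) := by simp
    _ ≤ _ := by push_cast; omega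

end TUlemmas

/-- At an extreme point of the dual feasible set, the columns corresponding to orders whose
both slack variables vanish span the whole price space. -/
lemma dual_extreme_span {I T : Type*} [Fintype I] [Fintype T]
    (Q : I → T → ℤ) (c : I → ℝ)
    {ystar : (T → ℝ) × (I → ℝ) × (I → ℝ)}
    (hy_ep : ystar ∈ Set.extremePoints ℝ
        {y : (T → ℝ) × (I → ℝ) × (I → ℝ) |
          (∀ i, (∑ t, (Q i t : ℝ) * y.1 t) + y.2.1 i - y.2.2 i = c i) ∧
          (∀ i, 0 ≤ y.2.1 i) ∧ (∀ i, 0 ≤ y.2.2 i)}) :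
    Submodule.span ℝ
      {v : T → ℝ | ∃ i, ystar.2.1 i = 0 ∧ ystar.2.2 i = 0 ∧ v = fun t => (Q i t : ℝ)}
      = ⊤ := by
  classical
  rw [mem_extremePoints] at hy_ep
  obtain ⟨hymem, hext⟩ := hy_ep
  obtain ⟨hfd, hγ0, hl0⟩ := hymem
  by_contra hne
  set V : Set (T → ℝ) :=
    {v : T → ℝ | ∃ i, ystar.2.1 i = 0 ∧ ystar.2.2 i = 0 ∧ v = fun t => (Q i t : ℝ)} with hV
  have hlt : Submodule.span ℝ V < ⊤ := lt_top_iff_ne_top.mpr hne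
  obtain ⟨φ, hφ0, hφbot⟩ :=
    Submodule.exists_dual_map_eq_bot_of_lt_top hlt inferInstance
  have hφker : ∀ x ∈ Submodule.span ℝ V, φ x = 0 := by
    intro x hx
    have h1 : φ x ∈ Submodule.map φ (Submodule.span ℝ V) := ⟨x, hx, rfl⟩
    rw [hφbot] at h1
    simpa using h1
  set π : T → ℝ := fun t => φ (Pi.single t 1) with hπ
  have hφx : ∀ x : T → ℝ, φ x = ∑ t, x t * π t := by
    intro x
    conv_lhs => rw [← Finset.univ_sum_single x]
    rw [map_sum]
    refine Finset.sum_congr rfl fun t _ => ?_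
    have h1 : Pi.single t (x t) = x t • (Pi.single t (1:ℝ) : T → ℝ) := by
      funext s
      rcases eq_or_ne s t with h | h <;> simp [Pi.single_apply, h]
    rw [h1, map_smul, smul_eq_mul]
  have hπ0 : π ≠ 0 := by
    intro hc
    apply hφ0
    apply LinearMap.ext
    intro x
    rw [hφx x, hc]
    simp
  set r : I → ℝ := fun i => ∑ t, (Q i t : ℝ) * π t with hr
  have hrφ : ∀ i, r i = φ (fun t => (Q i t : ℝ)) := fun i =>
    (hφx (fun t => (Q i t : ℝ))).symm
  have hrS : ∀ i, ystar.2.1 i = 0 → ystar.2.2 i = 0 → r i = 0 := by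
    intro i h1 h2
    rw [hrφ i]
    exact hφker _ (Submodule.subset_span ⟨i, h1, h2, rfl⟩)
  set g : I → ℝ := fun i => if 0 < ystar.2.1 i then -(r i) else 0 with hg
  set l : I → ℝ := fun i => if 0 < ystar.2.1 i then 0 else r i with hl
  have hγeq0 : ∀ i, ¬ (0 < ystar.2.1 i) → ystar.2.1 i = 0 := fun i h =>
    le_antisymm (not_lt.mp h) (hγ0 i)
  have hrel : ∀ i, r i + g i - l i = 0 := by
    intro i
    simp only [hg, hl]
    split_ifs with h
    · ring
    · ring
  have hlpos : ∀ i, ¬ (0 < ystar.2.1 i) → r i ≠ 0 → 0 < ystar.2.2 i := by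
    intro i h hri
    rcases lt_or_eq_of_le (hl0 i) with hp | hp
    · exact hp
    · exact absurd (hrS i (hγeq0 i h) hp.symm) hri
  set B : I → ℝ := fun i => if r i = 0 then 1
    else if 0 < ystar.2.1 i then ystar.2.1 i / |r i| else ystar.2.2 i / |r i| with hB
  have hBpos : ∀ i, 0 < B i := by
    intro i
    simp only [hB]
    split_ifs with h1 h2
    · norm_num
    · exact div_pos h2 (abs_pos.mpr h1)
    · exact div_pos (hlpos i h2 h1) (abs_pos.mpr h1)
  set s : Finset ℝ := insert 1 (Finset.univ.image B) with hs
  have hsne : s.Nonempty := ⟨1, Finset.mem_insert_self _ _⟩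
  set ε : ℝ := s.min' hsne with hε
  have hεpos : 0 < ε := by
    rw [hε]
    apply (Finset.lt_min'_iff _ _).mpr
    intro y hy
    rcases Finset.mem_insert.mp hy with h | h
    · rw [h]; norm_num
    · obtain ⟨i, _, rfl⟩ := Finset.mem_image.mp h
      exact hBpos i
  have hεB : ∀ i, ε ≤ B i := fun i =>
    Finset.min'_le _ _ (Finset.mem_insert_of_mem (Finset.mem_image_of_mem B
      (Finset.mem_univ i)))
  -- bounds on the perturbations of the slack variables
  have hgbound : ∀ i, |ε * g i| ≤ ystar.2.1 i ∨ g i = 0 := by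
    intro i
    simp only [hg]
    split_ifs with h
    · rcases eq_or_ne (r i) 0 with hri | hri
      · right; rw [hri]; ring
      · left
        have h1 : ε ≤ ystar.2.1 i / |r i| := by
          have := hεB i; simp only [hB, if_neg hri, if_pos h] at this; exact this
        have h2 : ε * |r i| ≤ ystar.2.1 i := by
          rw [← le_div_iff₀ (abs_pos.mpr hri)]; exact h1
        calc |ε * -(r i)| = ε * |r i| := by
              rw [abs_mul, abs_neg, abs_of_pos hεpos]
          _ ≤ ystar.2.1 i := h2
    · right; rfl
  have hlbound : ∀ i, |ε * l i| ≤ ystar.2.2 i ∨ l i = 0 := by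
    intro i
    simp only [hl]
    split_ifs with h
    · right; rfl
    · rcases eq_or_ne (r i) 0 with hri | hri
      · right; exact hri
      · left
        have h1 : ε ≤ ystar.2.2 i / |r i| := by
          have := hεB i; simp only [hB, if_neg hri, if_neg h] at this; exact this
        have h2 : ε * |r i| ≤ ystar.2.2 i := by
          rw [← le_div_iff₀ (abs_pos.mpr hri)]; exact h1
        calc |ε * r i| = ε * |r i| := by rw [abs_mul, abs_of_pos hεpos]
          _ ≤ ystar.2.2 i := h2
  set d : (T → ℝ) × (I → ℝ) × (I → ℝ) := (π, g, l) with hd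
  have hmem : ∀ (sgn : ℝ), sgn = 1 ∨ sgn = -1 → (ystar + (sgn * ε) • d) ∈
      {y : (T → ℝ) × (I → ℝ) × (I → ℝ) |
        (∀ i, (∑ t, (Q i t : ℝ) * y.1 t) + y.2.1 i - y.2.2 i = c i) ∧
        (∀ i, 0 ≤ y.2.1 i) ∧ (∀ i, 0 ≤ y.2.2 i)} := by
    intro sgn hsgn
    have habs : |sgn * ε| = ε := by
      rcases hsgn with h | h <;> rw [h] <;>
        simp [abs_of_pos hεpos]
    refine ⟨?_, ?_, ?_⟩
    · intro i
      have h1 : ∑ t, (Q i t : ℝ) * (ystar.1 t + (sgn * ε) * π t)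
          = (∑ t, (Q i t : ℝ) * ystar.1 t) + (sgn * ε) * r i := by
        rw [hr, Finset.mul_sum, ← Finset.sum_add_distrib]
        exact Finset.sum_congr rfl fun t _ => by ring
      show (∑ t, (Q i t : ℝ) * (ystar.1 t + (sgn * ε) * π t))
          + (ystar.2.1 i + (sgn * ε) * g i) - (ystar.2.2 i + (sgn * ε) * l i) = c i
      rw [h1]
      have h2 := hfd i
      have h4 : (sgn * ε) * r i + (sgn * ε) * g i - (sgn * ε) * l i = 0 := by
        have h3 := hrel i
        calc (sgn * ε) * r i + (sgn * ε) * g i - (sgn * ε) * l i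
            = (sgn * ε) * (r i + g i - l i) := by ring
          _ = 0 := by rw [h3]; ring
      linarith
    · intro i
      show 0 ≤ ystar.2.1 i + (sgn * ε) * g i
      rcases hgbound i with h | h
      · have h4 : |(sgn * ε) * g i| = |ε * g i| := by
          rcases hsgn with h | h <;> rw [h] <;> simp [neg_mul, one_mul, abs_neg]
        have h5 : -((sgn * ε) * g i) ≤ |ε * g i| := by
          rw [← h4]; exact neg_le_abs _
        linarith
      · rw [h]; simpa using hγ0 i
    · intro i
      show 0 ≤ ystar.2.2 i + (sgn * ε) * l i
      rcases hlbound i with h | h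
      · have h4 : |(sgn * ε) * l i| = |ε * l i| := by
          rcases hsgn with h | h <;> rw [h] <;> simp [neg_mul, one_mul, abs_neg]
        have h5 : -((sgn * ε) * l i) ≤ |ε * l i| := by
          rw [← h4]; exact neg_le_abs _
        linarith
      · rw [h]; simpa using hl0 i
  have hmem1 := hmem 1 (Or.inl rfl)
  have hmem2 := hmem (-1) (Or.inr rfl)
  have hseg : ystar ∈ openSegment ℝ (ystar + ((-1 : ℝ) * ε) • d)
      (ystar + ((1:ℝ) * ε) • d) := by
    refine ⟨1/2, 1/2, by norm_num, by norm_num, by norm_num, ?_⟩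
    module
  have := hext _ hmem2 _ hmem1 hseg
  have h6 : ystar + ((-1 : ℝ) * ε) • d = ystar := this.1
  have h7 : ((-1 : ℝ) * ε) • d = 0 := by
    have := congrArg (fun z => z - ystar) h6
    simpa [add_sub_cancel_left] using this
  have h8 : d = 0 := by
    have hne0 : ((-1 : ℝ) * ε) ≠ 0 := by
      intro hc
      have : ε = 0 := by linarith [neg_eq_zero.mp (by linarith [hc] : -(ε) = 0)]
      exact absurd this (ne_of_gt hεpos)
    exact (smul_eq_zero.mp h7).resolve_left hne0
  apply hπ0
  have := congrArg Prod.fst h8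
  simpa [hd] using this

open scoped Matrix in
lemma cast_cramer {k : ℕ} (B : Matrix (Fin k) (Fin k) ℤ) (b : Fin k → ℤ) (r : Fin k) :
    ((B.cramer b r : ℤ) : ℝ) = (B.map (fun z : ℤ => (z : ℝ))).cramer (fun j => (b j : ℝ)) r := by
  rw [Matrix.cramer_apply, Matrix.cramer_apply]
  have h1 : (B.map (fun z : ℤ => (z : ℝ))).updateCol r (fun j => (b j : ℝ))
      = (B.updateCol r b).map (fun z : ℤ => (z : ℝ)) := by
    ext x y
    rcases eq_or_ne y r with h | h <;>
      simp [Matrix.updateCol_apply, h, Matrix.map_apply]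
  rw [h1]
  have h2 := RingHom.map_det (Int.castRingHom ℝ) (B.updateCol r b)
  rw [RingHom.mapMatrix_apply] at h2
  exact h2


set_option maxHeartbeats 1000000 in
open scoped Matrix in
/-- For the weighted linear program with scaling factor `G > 2·|T|` over a
totally unimodular clearing matrix of full rank `|T|`, a primal optimal extreme point `δ*`
together with the prices `π̄ t = ⌊π* t / G + 1/2⌋` rounded from a dual optimal extreme
point `(π*, γ*, λ*)` satisfies the price conditions. -/
theorem rounded_dual_prices_satisfy_price_conditions
    {I T : Type*} [Fintype I] [Fintype T]
    (Q p : I → T → ℤ) (δbar : I → ℕ)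
    (hTU : IsTotallyUnimodularMat (Matrix.of fun (t : T) (i : I) => Q i t))
    (hrank : (Matrix.of fun (t : T) (i : I) => (Q i t : ℝ)).rank = Fintype.card T)
    (G : ℝ) (hG : 2 * (Fintype.card T : ℝ) < G)
    (δstar : I → ℝ)
    (hδ_ep : δstar ∈ Set.extremePoints ℝ
        {δ : I → ℝ | (∀ t, ∑ i, (Q i t : ℝ) * δ i = 0) ∧
          ∀ i, 0 ≤ δ i ∧ δ i ≤ (δbar i : ℝ)})
    (hδ_opt : ∀ δ : I → ℝ,
        (∀ t, ∑ i, (Q i t : ℝ) * δ i = 0) →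
        (∀ i, 0 ≤ δ i ∧ δ i ≤ (δbar i : ℝ)) →
        ∑ i, (1 + G * ∑ t, (p i t : ℝ) * (Q i t : ℝ)) * δ i
          ≤ ∑ i, (1 + G * ∑ t, (p i t : ℝ) * (Q i t : ℝ)) * δstar i)
    (ystar : (T → ℝ) × (I → ℝ) × (I → ℝ))
    (hy_ep : ystar ∈ Set.extremePoints ℝ
        {y : (T → ℝ) × (I → ℝ) × (I → ℝ) |
          (∀ i, (∑ t, (Q i t : ℝ) * y.1 t) + y.2.1 i - y.2.2 i
            = 1 + G * ∑ t, (p i t : ℝ) * (Q i t : ℝ)) ∧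
          (∀ i, 0 ≤ y.2.1 i) ∧ (∀ i, 0 ≤ y.2.2 i)})
    (hy_opt : ∀ y : (T → ℝ) × (I → ℝ) × (I → ℝ),
        (∀ i, (∑ t, (Q i t : ℝ) * y.1 t) + y.2.1 i - y.2.2 i
          = 1 + G * ∑ t, (p i t : ℝ) * (Q i t : ℝ)) →
        (∀ i, 0 ≤ y.2.1 i) → (∀ i, 0 ≤ y.2.2 i) →
        ∑ i, (δbar i : ℝ) * ystar.2.1 i ≤ ∑ i, (δbar i : ℝ) * y.2.1 i) :
    ∀ i : I,
      (0 < δstar i →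
        0 ≤ ∑ t, ((p i t : ℝ) - ((⌊ystar.1 t / G + 1 / 2⌋ : ℤ) : ℝ)) * (Q i t : ℝ)) ∧
      (δstar i < (δbar i : ℝ) →
        ∑ t, ((p i t : ℝ) - ((⌊ystar.1 t / G + 1 / 2⌋ : ℤ) : ℝ)) * (Q i t : ℝ) ≤ 0) := by
  classical
  intro i
  rcases isEmpty_or_nonempty T with hT | hT
  · constructor <;> intro _ <;> simp
  set c : I → ℝ := fun j => 1 + G * ∑ t, (p j t : ℝ) * (Q j t : ℝ) with hc
  have hceq : ∀ j, (1 + G * ∑ t, (p j t : ℝ) * (Q j t : ℝ)) = c j := fun _ => rfl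
  simp only [hceq] at hδ_opt hy_opt hy_ep
  obtain ⟨⟨hpfeas, hpbound⟩, -⟩ := mem_extremePoints.mp hδ_ep
  obtain ⟨⟨hdfeas, hgam0, hlam0⟩, -⟩ := mem_extremePoints.mp hy_ep
  -- ===== complementary slackness =====
  obtain ⟨π₀, γ₀, l₀, hfd0, hγ00, hl00, hobj0⟩ :=
    exists_dual_certificate Q δbar c δstar hpfeas hpbound hδ_opt
  have hwk : ∑ j, (δbar j : ℝ) * ystar.2.1 j ≤ ∑ j, c j * δstar j := by
    rw [← hobj0]
    exact hy_opt (π₀, γ₀, l₀) hfd0 hγ00 hl00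
  have hgap : ∑ j, c j * δstar j
      = ∑ j, ystar.2.1 j * δstar j - ∑ j, ystar.2.2 j * δstar j := by
    have h1 : ∀ j, c j * δstar j = (∑ t, (Q j t : ℝ) * ystar.1 t) * δstar j
        + ystar.2.1 j * δstar j - ystar.2.2 j * δstar j := by
      intro j; rw [← hdfeas j]; ring
    rw [Finset.sum_congr rfl fun j _ => h1 j]
    have h2 : ∑ j, (∑ t, (Q j t : ℝ) * ystar.1 t) * δstar j = 0 := by
      have h3 : ∀ j, (∑ t, (Q j t : ℝ) * ystar.1 t) * δstar j
          = ∑ t, (Q j t : ℝ) * δstar j * ystar.1 t := by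
        intro j; rw [Finset.sum_mul]; exact Finset.sum_congr rfl fun t _ => by ring
      rw [Finset.sum_congr rfl fun j _ => h3 j, Finset.sum_comm]
      apply Finset.sum_eq_zero
      intro t _
      rw [← Finset.sum_mul, hpfeas t, zero_mul]
    have h4 : ∀ j, (∑ t, (Q j t : ℝ) * ystar.1 t) * δstar j
        + ystar.2.1 j * δstar j - ystar.2.2 j * δstar j
        = (∑ t, (Q j t : ℝ) * ystar.1 t) * δstar j
          + (ystar.2.1 j * δstar j - ystar.2.2 j * δstar j) := fun j => by ring
    rw [Finset.sum_congr rfl fun j _ => h4 j, Finset.sum_add_distrib, h2,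
      Finset.sum_sub_distrib]
    ring
  have htermnn : ∀ j, 0 ≤ ystar.2.1 j * ((δbar j : ℝ) - δstar j) + ystar.2.2 j * δstar j :=
    fun j => add_nonneg (mul_nonneg (hgam0 j) (by linarith [(hpbound j).2]))
      (mul_nonneg (hlam0 j) (hpbound j).1)
  have hsum0 : ∑ j, (ystar.2.1 j * ((δbar j : ℝ) - δstar j) + ystar.2.2 j * δstar j) = 0 := by
    have hle : ∑ j, (ystar.2.1 j * ((δbar j : ℝ) - δstar j) + ystar.2.2 j * δstar j)
        = ∑ j, (δbar j : ℝ) * ystar.2.1 j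
          - (∑ j, ystar.2.1 j * δstar j - ∑ j, ystar.2.2 j * δstar j) := by
      have h6 : ∀ j, ystar.2.1 j * ((δbar j : ℝ) - δstar j)
          = (δbar j : ℝ) * ystar.2.1 j - ystar.2.1 j * δstar j := fun j => by ring
      rw [Finset.sum_add_distrib, Finset.sum_congr rfl fun j _ => h6 j,
        Finset.sum_sub_distrib]
      ring
    have hge : (0:ℝ) ≤ ∑ j, (ystar.2.1 j * ((δbar j : ℝ) - δstar j) + ystar.2.2 j * δstar j) :=
      Finset.sum_nonneg (fun j _ => htermnn j)
    rw [hgap] at hwk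
    linarith
  have hterm0 := (Finset.sum_eq_zero_iff_of_nonneg (fun j _ => htermnn j)).mp hsum0
  have hCSl : 0 < δstar i → ystar.2.2 i = 0 := by
    intro hpos
    have h1 := hterm0 i (Finset.mem_univ i)
    have h2 : ystar.2.2 i * δstar i = 0 := by
      have ha := mul_nonneg (hgam0 i) (by linarith [(hpbound i).2] : (0:ℝ) ≤ (δbar i : ℝ) - δstar i)
      have hb := mul_nonneg (hlam0 i) (hpbound i).1
      linarith
    rcases mul_eq_zero.mp h2 with h | h
    · exact h
    · exact absurd h (ne_of_gt hpos)
  have hCSg : δstar i < (δbar i : ℝ) → ystar.2.1 i = 0 := by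
    intro hlt
    have h1 := hterm0 i (Finset.mem_univ i)
    have h2 : ystar.2.1 i * ((δbar i : ℝ) - δstar i) = 0 := by
      have ha := mul_nonneg (hgam0 i) (by linarith : (0:ℝ) ≤ (δbar i : ℝ) - δstar i)
      have hb := mul_nonneg (hlam0 i) (hpbound i).1
      linarith
    rcases mul_eq_zero.mp h2 with h | h
    · exact h
    · linarith [h]
  -- ===== basis extraction from the dual extreme point =====
  set k := Fintype.card T with hk
  have hk1 : 1 ≤ k := Fintype.card_pos
  have hkR : (1:ℝ) ≤ (k:ℝ) := by exact_mod_cast hk1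
  have hG2k : 2 * (k:ℝ) < G := hG
  have hG0 : 0 < G := by linarith
  have hspan := dual_extreme_span Q c hy_ep
  obtain ⟨sb, hsbV, hsbspan, hsbli⟩ := exists_linearIndependent ℝ
    {v : T → ℝ | ∃ j, ystar.2.1 j = 0 ∧ ystar.2.2 j = 0 ∧ v = fun t => (Q j t : ℝ)}
  rw [hspan] at hsbspan
  haveI hfin : Fintype sb := (LinearIndependent.setFinite hsbli).fintype
  have hcard : Fintype.card sb = k := by
    have hb : Module.Basis sb ℝ (T → ℝ) := Module.Basis.mk hsbli (by rw [Subtype.range_coe, hsbspan])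
    have h1 := Module.finrank_eq_card_basis hb
    rw [Module.finrank_fintype_fun_eq_card] at h1
    exact h1.symm
  have hchoice : ∀ v : sb, ∃ j, ystar.2.1 j = 0 ∧ ystar.2.2 j = 0
      ∧ (v : T → ℝ) = fun t => (Q j t : ℝ) := fun v => hsbV v.2
  choose φc hφ1 hφ2 hφ3 using hchoice
  set eJ : sb ≃ Fin k := Fintype.equivFinOfCardEq hcard with heJ
  set eT : T ≃ Fin k := Fintype.equivFinOfCardEq hk.symm with heT
  set g : Fin k → I := fun j => φc (eJ.symm j) with hgdef
  have hφinj : Function.Injective φc := by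
    intro u v huv
    have h1 : (u : T → ℝ) = (v : T → ℝ) := by rw [hφ3 u, hφ3 v, huv]
    exact Subtype.ext h1
  have hginj : Function.Injective g := hφinj.comp (Equiv.injective _)
  have hgS1 : ∀ j, ystar.2.1 (g j) = 0 := fun j => hφ1 _
  have hgS2 : ∀ j, ystar.2.2 (g j) = 0 := fun j => hφ2 _
  have hgaR : ∀ j, ((eJ.symm j : sb) : T → ℝ) = fun t => (Q (g j) t : ℝ) := fun j => hφ3 _
  set Mint : Matrix (Fin k) (Fin k) ℤ := Matrix.of (fun r j => Q (g j) (eT.symm r)) with hMint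
  set MR : Matrix (Fin k) (Fin k) ℝ := Mint.map (fun z : ℤ => (z : ℝ)) with hMR
  have hmv : ∀ (M : Matrix (Fin k) (Fin k) ℝ) (v : Fin k → ℝ) (r : Fin k),
      (M *ᵥ v) r = ∑ j, M r j * v j := fun M v r => rfl
  have hMTU : IsTotallyUnimodularMat Mint := by
    have h1 : Mint = (Matrix.of fun (t : T) (i : I) => Q i t).submatrix
        (fun r => eT.symm r) g := rfl
    rw [h1]
    exact hTU.submatrix' _ _ (Equiv.injective _) hginj
  have hdetR : MR.det = ((Mint.det : ℤ) : ℝ) := by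
    have h2 := RingHom.map_det (Int.castRingHom ℝ) Mint
    rw [RingHom.mapMatrix_apply] at h2
    rw [hMR]
    exact h2.symm
  -- the columns of MR are linearly independent, so det ≠ 0
  have hMRdet0 : MR.det ≠ 0 := by
    intro h0
    obtain ⟨v, hv0, hvk⟩ := Matrix.exists_mulVec_eq_zero_iff.mpr h0
    have hli2 : LinearIndependent ℝ (fun j : Fin k => ((eJ.symm j : sb) : T → ℝ)) :=
      hsbli.comp _ (Equiv.injective eJ.symm)
    apply hv0
    funext j
    refine Fintype.linearIndependent_iff.mp hli2 v ?_ j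
    funext t
    have h1 : (∑ j', v j' • ((eJ.symm j' : sb) : T → ℝ)) t
        = ∑ j', v j' * (Q (g j') t : ℝ) := by
      rw [Finset.sum_apply]
      exact Finset.sum_congr rfl fun j' _ => by rw [hgaR j']; rfl
    have h2 : ∑ j', v j' * (Q (g j') t : ℝ) = (MR *ᵥ v) (eT t) := by
      rw [hmv]
      refine Finset.sum_congr rfl fun j' _ => ?_
      simp only [hMR, hMint, Matrix.map_apply, Matrix.of_apply, Equiv.symm_apply_apply]
      ring
    rw [h1, h2, hvk]
    rfl
  have hMdet0 : Mint.det ≠ 0 := by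
    intro h0
    apply hMRdet0
    rw [hdetR, h0]
    norm_num
  have hdd : Mint.det = 1 ∨ Mint.det = -1 := hMTU.det_mem.resolve_left hMdet0
  have hddR : ((Mint.det:ℤ):ℝ) * ((Mint.det:ℤ):ℝ) = 1 := by
    rcases hdd with h | h <;> rw [h] <;> norm_num
  -- the tight constraints determine ystar.1
  set π' : Fin k → ℝ := fun r => ystar.1 (eT.symm r) with hπ'
  set cg : Fin k → ℝ := fun j => c (g j) with hcg
  have hMtv : MRᵀ *ᵥ π' = cg := by
    funext j
    have h1 : (MRᵀ *ᵥ π') j = ∑ r, (Q (g j) (eT.symm r) : ℝ) * ystar.1 (eT.symm r) := by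
      rw [hmv]
      refine Finset.sum_congr rfl fun r _ => ?_
      simp only [Matrix.transpose_apply, hMR, hMint, Matrix.map_apply, Matrix.of_apply, hπ']
    rw [h1, Equiv.sum_comp eT.symm (fun t => (Q (g j) t : ℝ) * ystar.1 t)]
    have h2 := hdfeas (g j)
    rw [hgS1 j, hgS2 j] at h2
    simpa [hcg, hc] using h2
  have hcram : MR.det • π' = (MRᵀ).cramer cg := by
    rw [← hMtv, Matrix.cramer_eq_adjugate_mulVec, Matrix.mulVec_mulVec,
      Matrix.adjugate_mul, Matrix.smul_mulVec, Matrix.one_mulVec,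
      Matrix.det_transpose]
  -- split cg into the all-ones part and G times the value part
  set vI : I → ℤ := fun j => ∑ t, p j t * Q j t with hvI
  have hcR : ∀ j, c j = 1 + G * ((vI j : ℤ) : ℝ) := by
    intro j
    rw [hc, hvI]
    push_cast
    ring
  set D1I : Fin k → ℤ := (Mintᵀ).cramer (fun _ => (1:ℤ)) with hD1I
  set D2I : Fin k → ℤ := (Mintᵀ).cramer (fun j => vI (g j)) with hD2I
  have hMRT : MRᵀ = (Mintᵀ).map (fun z : ℤ => (z : ℝ)) := by
    rw [hMR, Matrix.transpose_map]
  have hcramsplit : ∀ r, (MRᵀ).cramer cg r = ((D1I r : ℤ) : ℝ) + G * ((D2I r : ℤ) : ℝ) := by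
    intro r
    have h1 : cg = (fun _ => (1:ℝ)) + G • (fun j => ((vI (g j) : ℤ) : ℝ)) := by
      funext j
      simp only [hcg, Pi.add_apply, Pi.smul_apply, smul_eq_mul]
      exact hcR (g j)
    rw [h1, map_add, map_smul]
    have h2 : ((D1I r : ℤ) : ℝ) = (MRᵀ).cramer (fun _ => (1:ℝ)) r := by
      rw [hD1I, cast_cramer, hMRT]
      norm_num
    have h3 : ((D2I r : ℤ) : ℝ) = (MRᵀ).cramer (fun j => ((vI (g j) : ℤ) : ℝ)) r := by
      rw [hD2I, cast_cramer, hMRT]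
    rw [Pi.add_apply, Pi.smul_apply, h2, h3, smul_eq_mul]
  set mq : T → ℤ := fun t => Mint.det * D1I (eT t) with hmq
  set wq : T → ℤ := fun t => Mint.det * D2I (eT t) with hwq
  have hdecomp : ∀ t, ystar.1 t = ((mq t : ℤ) : ℝ) + G * ((wq t : ℤ) : ℝ) := by
    intro t
    have h1 := congrFun hcram (eT t)
    rw [Pi.smul_apply, smul_eq_mul, hcramsplit (eT t), hdetR] at h1
    have h2 : π' (eT t) = ystar.1 t := by
      simp only [hπ', Equiv.symm_apply_apply]
    rw [h2] at h1
    have h3 := congrArg (fun z => ((Mint.det:ℤ):ℝ) * z) h1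
    rw [← mul_assoc, hddR, one_mul] at h3
    rw [h3, hmq, hwq]
    push_cast
    ring
  have hmb : ∀ t, |mq t| ≤ (k:ℤ) := by
    intro t
    rw [hmq, abs_mul]
    have h1 : |Mint.det| = 1 := by rcases hdd with h | h <;> rw [h] <;> norm_num
    rw [h1, one_mul, hD1I, Matrix.cramer_apply]
    exact hMTU.transpose.abs_det_updateCol_one_le (eT t)
  have hfloor : ∀ t, ⌊ystar.1 t / G + 1 / 2⌋ = wq t := by
    intro t
    have hmbR : |((mq t : ℤ) : ℝ)| ≤ (k:ℝ) := by exact_mod_cast hmb t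
    have habs := abs_le.mp hmbR
    have hkG : (k:ℝ) < G/2 := by linarith
    have hx : ystar.1 t / G + 1/2 = ((wq t:ℤ):ℝ) + (((mq t:ℤ):ℝ)/G + 1/2) := by
      rw [hdecomp t]
      field_simp
      ring
    have hb1 : -(1/2:ℝ) < ((mq t:ℤ):ℝ)/G := by
      rw [neg_lt, ← neg_div]
      rw [div_lt_iff₀ hG0]
      nlinarith
    have hb2 : ((mq t:ℤ):ℝ)/G < 1/2 := by
      rw [div_lt_iff₀ hG0]
      nlinarith
    rw [Int.floor_eq_iff, hx]
    constructor <;> push_cast <;> linarith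
  -- ===== expansion of column i over the basis =====
  set aI : Fin k → ℤ := fun r => Q i (eT.symm r) with haI
  set εI : Fin k → ℤ := fun j => Mint.det * Mint.cramer aI j with hεI
  have hεmem : ∀ j, εI j = 0 ∨ εI j = 1 ∨ εI j = -1 := by
    intro j
    have hcram2 : Mint.cramer aI j = 0 ∨ Mint.cramer aI j = 1 ∨ Mint.cramer aI j = -1 := by
      rw [Matrix.cramer_apply]
      by_cases hdup : ∃ j', j' ≠ j ∧ g j' = i
      · obtain ⟨j', hj'ne, hj'eq⟩ := hdup
        left
        apply Matrix.det_zero_of_column_eq hj'ne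
        intro x
        rw [Matrix.updateCol_apply, Matrix.updateCol_apply, if_neg hj'ne,
          if_pos rfl, hMint]
        simp only [Matrix.of_apply, hj'eq, haI]
      · push_neg at hdup
        set g' : Fin k → I := Function.update g j i with hg'
        have hg'inj : Function.Injective g' := by
          intro u v huv
          rcases eq_or_ne u j with hu | hu <;> rcases eq_or_ne v j with hv | hv
          · rw [hu, hv]
          · rw [hg', hu] at huv
            rw [Function.update_self, Function.update_of_ne hv] at huv
            exact absurd huv.symm (hdup v hv)
          · rw [hg', hv] at huv
            rw [Function.update_self, Function.update_of_ne hu] at huv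
            exact absurd huv (hdup u hu)
          · rw [hg', Function.update_of_ne hu, Function.update_of_ne hv] at huv
            exact hginj huv
        have heq : Mint.updateCol j aI
            = (Matrix.of fun (t : T) (i' : I) => Q i' t).submatrix (fun r => eT.symm r) g' := by
          ext r j''
          rcases eq_or_ne j'' j with h | h
          · rw [h, Matrix.updateCol_apply, if_pos rfl]
            simp only [Matrix.submatrix_apply, Matrix.of_apply, hg', Function.update_self, haI]
          · rw [Matrix.updateCol_apply, if_neg h]
            simp only [Matrix.submatrix_apply, Matrix.of_apply, hg',
              Function.update_of_ne h, hMint]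
        rw [heq]
        exact hTU k _ _ (Equiv.injective _) hg'inj
    rcases hdd with h | h <;> rcases hcram2 with h2 | h2 | h2 <;>
      simp only [hεI, h, h2] <;> norm_num
  set εR : Fin k → ℝ := fun j => ((εI j : ℤ) : ℝ) with hεR
  have hMRεa : MR *ᵥ εR = fun r => ((aI r : ℤ) : ℝ) := by
    have h1 := Matrix.mulVec_cramer MR (fun r => ((aI r : ℤ) : ℝ))
    have h2 : ∀ j, MR.cramer (fun r => ((aI r : ℤ) : ℝ)) j = ((Mint.cramer aI j : ℤ) : ℝ) := by
      intro j
      rw [hMR, ← cast_cramer]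
    funext r
    have h3 : (MR *ᵥ εR) r = ((Mint.det:ℤ):ℝ) * (MR *ᵥ MR.cramer (fun r => ((aI r : ℤ) : ℝ))) r := by
      rw [hmv, hmv, Finset.mul_sum]
      refine Finset.sum_congr rfl fun j _ => ?_
      rw [h2 j]
      simp only [hεR, hεI]
      push_cast
      ring
    rw [h3, h1]
    simp only [Pi.smul_apply, smul_eq_mul, hdetR]
    rw [← mul_assoc, hddR, one_mul]
  -- key sum identities
  set E : ℝ := ∑ j, εR j with hE
  set SR : ℝ := ∑ t, (Q i t : ℝ) * ystar.1 t with hSR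
  set VR : ℝ := ∑ j, εR j * ((vI (g j) : ℤ) : ℝ) with hVR
  have hR1 : SR = E + G * VR := by
    have h1 : SR = ∑ r, ((aI r : ℤ):ℝ) * π' r := by
      rw [hSR, ← Equiv.sum_comp eT.symm (fun t => (Q i t : ℝ) * ystar.1 t)]
    have h2 : ∀ r, ((aI r : ℤ):ℝ) = ∑ j, MR r j * εR j := by
      intro r
      have h2a := congrFun hMRεa r
      rw [hmv] at h2a
      rw [← h2a]
    have h3 : SR = ∑ j, εR j * cg j := by
      rw [h1]
      have h4 : ∀ r, ((aI r : ℤ):ℝ) * π' r = ∑ j, εR j * (MR r j * π' r) := by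
        intro r
        rw [h2 r, Finset.sum_mul]
        exact Finset.sum_congr rfl fun j _ => by ring
      rw [Finset.sum_congr rfl fun r _ => h4 r, Finset.sum_comm]
      refine Finset.sum_congr rfl fun j _ => ?_
      rw [← Finset.mul_sum]
      congr 1
      have h5 := congrFun hMtv j
      rw [hmv] at h5
      rw [← h5]
      exact Finset.sum_congr rfl fun r _ => by rw [Matrix.transpose_apply]
    rw [h3, hE, hVR, Finset.mul_sum, ← Finset.sum_add_distrib]
    refine Finset.sum_congr rfl fun j _ => ?_
    simp only [hcg]
    rw [hcR (g j)]
    ring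
  have hR2 : ∑ t, (Q i t : ℝ) * ((mq t : ℤ) : ℝ) = E := by
    have h1 : ∑ t, (Q i t : ℝ) * ((mq t : ℤ) : ℝ)
        = ((Mint.det:ℤ):ℝ) * ∑ r, ((aI r : ℤ):ℝ) * ((D1I r : ℤ):ℝ) := by
      rw [← Equiv.sum_comp eT.symm (fun t => (Q i t : ℝ) * ((mq t : ℤ) : ℝ)), Finset.mul_sum]
      refine Finset.sum_congr rfl fun r _ => ?_
      rw [haI, hmq]
      simp only [Equiv.apply_symm_apply]
      push_cast
      ring
    have h2 : ∀ r, ((aI r : ℤ):ℝ) = ∑ j, MR r j * εR j := by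
      intro r
      have h2a := congrFun hMRεa r
      rw [hmv] at h2a
      rw [← h2a]
    have hD1cast : ∀ r, ((D1I r : ℤ):ℝ) = (MRᵀ).cramer (fun _ => (1:ℝ)) r := by
      intro r
      rw [hD1I, cast_cramer, hMRT]
      norm_num
    have h3 : ∑ r, ((aI r : ℤ):ℝ) * ((D1I r : ℤ):ℝ)
        = ∑ j, εR j * (MRᵀ *ᵥ (MRᵀ).cramer (fun _ => (1:ℝ))) j := by
      have h4 : ∀ r, ((aI r : ℤ):ℝ) * ((D1I r : ℤ):ℝ)
          = ∑ j, εR j * (MR r j * (MRᵀ).cramer (fun _ => (1:ℝ)) r) := by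
        intro r
        rw [h2 r, hD1cast r, Finset.sum_mul]
        exact Finset.sum_congr rfl fun j _ => by ring
      rw [Finset.sum_congr rfl fun r _ => h4 r, Finset.sum_comm]
      refine Finset.sum_congr rfl fun j _ => ?_
      rw [← Finset.mul_sum]
      congr 1
    rw [h1, h3, Matrix.mulVec_cramer (MRᵀ) (fun _ => (1:ℝ))]
    have h5 : ∀ j, εR j * ((MRᵀ).det • (fun _ : Fin k => (1:ℝ))) j = εR j * ((Mint.det:ℤ):ℝ) := by
      intro j
      rw [Pi.smul_apply, smul_eq_mul, Matrix.det_transpose, hdetR]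
      ring
    rw [Finset.sum_congr rfl fun j _ => h5 j, ← Finset.sum_mul, ← hE]
    linear_combination E * hddR
  have hSw : ∑ t, (Q i t : ℝ) * ((wq t : ℤ) : ℝ) = VR := by
    have h1 : SR = ∑ t, (Q i t : ℝ) * ((mq t : ℤ) : ℝ)
        + G * ∑ t, (Q i t : ℝ) * ((wq t : ℤ) : ℝ) := by
      rw [hSR, Finset.mul_sum, ← Finset.sum_add_distrib]
      refine Finset.sum_congr rfl fun t _ => ?_
      rw [hdecomp t]
      ring
    rw [hR2] at h1
    rw [hR1] at h1
    have h2 := add_left_cancel h1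
    exact (mul_left_cancel₀ (ne_of_gt hG0) h2).symm
  -- bounds on E
  have hEb : |E| ≤ (k:ℝ) := by
    rw [hE]
    calc |∑ j, εR j| ≤ ∑ j, |εR j| := Finset.abs_sum_le_sum_abs _ _
      _ ≤ ∑ _j : Fin k, (1:ℝ) := by
          refine Finset.sum_le_sum fun j _ => ?_
          rcases hεmem j with h | h | h <;> simp only [hεR, h] <;> norm_num
      _ = (k:ℝ) := by simp
  -- ===== conclusion =====
  have hgoal : ∀ q : ℤ, (∑ t, ((p i t : ℝ) - ((⌊ystar.1 t / G + 1 / 2⌋ : ℤ) : ℝ)) * (Q i t : ℝ))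
      = ((vI i : ℤ) : ℝ) - ∑ t, (Q i t : ℝ) * ((wq t : ℤ) : ℝ) := by
    intro q
    have hterm : ∀ t, ((p i t : ℝ) - ((⌊ystar.1 t / G + 1 / 2⌋ : ℤ) : ℝ)) * (Q i t : ℝ)
        = (p i t : ℝ) * (Q i t : ℝ) - (Q i t : ℝ) * ((wq t : ℤ) : ℝ) := by
      intro t
      rw [hfloor t]
      ring
    rw [Finset.sum_congr rfl fun t _ => hterm t, Finset.sum_sub_distrib, hvI]
    push_cast
    ring
  have hfd := hdfeas i
  rw [hcR i] at hfd
  constructor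
  · intro hpos
    have hl0 := hCSl hpos
    rw [hl0] at hfd
    have hSRle : SR ≤ 1 + G * ((vI i : ℤ) : ℝ) := by
      rw [hSR]
      linarith [hgam0 i, hfd]
    rw [hR1] at hSRle
    have habs := abs_le.mp hEb
    have hVle : VR ≤ ((vI i : ℤ) : ℝ) := by
      by_contra hcon
      push_neg at hcon
      -- VR and vI i are integers
      have hVint : VR = ((∑ j, εI j * vI (g j) : ℤ) : ℝ) := by
        rw [hVR]
        push_cast
        rfl
      rw [hVint] at hcon hSRle
      have hlt' : (vI i : ℤ) < ∑ j, εI j * vI (g j) := by exact_mod_cast hcon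
      have hge1 : ((vI i : ℤ):ℝ) + 1 ≤ ((∑ j, εI j * vI (g j) : ℤ) : ℝ) := by
        exact_mod_cast Int.add_one_le_iff.mpr hlt'
      have hmul := mul_le_mul_of_nonneg_left hge1 (le_of_lt hG0)
      linarith [habs.1, habs.2, hkR, hG2k, hmul]
    rw [hgoal 0, hSw]
    linarith
  · intro hlt
    have hg0 := hCSg hlt
    rw [hg0] at hfd
    have hSRge : 1 + G * ((vI i : ℤ) : ℝ) ≤ SR := by
      rw [hSR]
      linarith [hlam0 i, hfd]
    rw [hR1] at hSRge
    have habs := abs_le.mp hEb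
    have hVge : ((vI i : ℤ) : ℝ) ≤ VR := by
      by_contra hcon
      push_neg at hcon
      have hVint : VR = ((∑ j, εI j * vI (g j) : ℤ) : ℝ) := by
        rw [hVR]
        push_cast
        rfl
      rw [hVint] at hcon hSRge
      have hlt' : (∑ j, εI j * vI (g j)) < vI i := by exact_mod_cast hcon
      have hge1 : ((∑ j, εI j * vI (g j) : ℤ):ℝ) + 1 ≤ ((vI i : ℤ) : ℝ) := by
        exact_mod_cast Int.add_one_le_iff.mpr hlt'
      have hmul := mul_le_mul_of_nonneg_left hge1 (le_of_lt hG0)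
      linarith [habs.1, habs.2, hkR, hG2k, hmul]
    rw [hgoal 0, hSw]
    linarith
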